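/- arXiv:2508.15282 — 2 statements merged into one kernel-verified Lean document; each statement's English description precedes it below -/
import Mathlib

section
/- The set of compact subsets A of ℝ whose Hausdorff dimension differs from their lower (Assouad) dimension is dense in the space of nonempty compact subsets of ℝ with the Hausdorff metric. -/
open MeasureTheory Metric Filter Topology

/-- Smallest number of sets of diameter at most `r` needed to cover `F`. -/
noncomputable def coverNum (F : Set ℝ) (r : ℝ) : ℕ :=
  sInf {n : ℕ | ∃ 𝒰 : Finset (Set ℝ), 𝒰.card = n ∧ (∀ U ∈ 𝒰, Metric.diam U ≤ r) ∧
    F ⊆ ⋃ U ∈ 𝒰, (U : Set ℝ)}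

/-- Lower (Assouad) dimension of a set `E ⊆ ℝ`. -/
noncomputable def lowerDimSet (E : Set ℝ) : ℝ :=
  sSup {β : ℝ | 0 ≤ β ∧ ∃ M : ℝ, 0 < M ∧ ∀ x ∈ E, ∀ R r : ℝ, 0 < r → r < R →
    R ≤ Metric.diam E →
    M * (R / r) ^ β ≤ (coverNum (Metric.closedBall x R ∩ E) r : ℝ)}

/-- Topological support of a measure. -/
def msupport {X : Type*} [MetricSpace X] [MeasurableSpace X] (μ : Measure X) : Set X :=
  {x | ∀ ε : ℝ, 0 < ε → 0 < μ (Metric.ball x ε)}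

/-- Lower (Assouad) dimension of a measure. -/
noncomputable def lowerDimMeas {X : Type*} [MetricSpace X] [MeasurableSpace X]
    (μ : Measure X) : ℝ :=
  sSup {β : ℝ | 0 ≤ β ∧ ∃ M : ℝ, 0 < M ∧ ∀ x ∈ msupport μ, ∀ R r : ℝ, 0 < r → r < R →
    R ≤ Metric.diam (msupport μ) →
    ENNReal.ofReal (M * (R / r) ^ β) ≤
      μ (Metric.closedBall x R) / μ (Metric.closedBall x r)}

/-- `n`-th quantization error of order `r` of a measure. -/
noncomputable def quantErr {X : Type*} [MetricSpace X] [MeasurableSpace X]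
    (μ : Measure X) (n : ℕ) (r : ℝ) : ℝ :=
  sInf {v : ℝ | ∃ A : Finset X, A.Nonempty ∧ A.card ≤ n ∧
    v = ∫ x, Metric.infDist x (A : Set X) ^ r ∂μ}

/-- The quantization dimension of order `r` of `μ` exists and equals `D`. -/
noncomputable def HasQDim {X : Type*} [MetricSpace X] [MeasurableSpace X]
    (μ : Measure X) (r D : ℝ) : Prop :=
  Filter.Tendsto (fun n : ℕ => r * Real.log n / (- Real.log (quantErr μ n r)))
    Filter.atTop (nhds D)

/-- Convolution of measures: pushforward of the product under addition. -/
noncomputable def mconv {E : Type*} [MeasurableSpace E] [Add E] (μ ν : Measure E) : Measure E :=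
  Measure.map (fun p : E × E => p.1 + p.2) (μ.prod ν)

lemma coverNum_le_one {F : Set ℝ} {p r : ℝ} (hF : F ⊆ {p}) (hr : 0 ≤ r) :
    coverNum F r ≤ 1 := by
  apply Nat.sInf_le
  refine ⟨{({p} : Set ℝ)}, by simp, ?_, ?_⟩
  · intro U hU
    simp only [Finset.mem_singleton] at hU
    subst hU
    simpa [Metric.diam_singleton] using hr
  · simpa using hF

lemma beta_eq_zero {β M : ℝ} (hβ : 0 ≤ β) (hM : 0 < M) {R0 : ℝ} (hR0 : 0 < R0)
    (h : ∀ r : ℝ, 0 < r → r < R0 → M * (R0 / r) ^ β ≤ 1) : β = 0 := by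
  by_contra hne
  have hβpos : 0 < β := lt_of_le_of_ne hβ (Ne.symm hne)
  set t := min (1/2 : ℝ) ((M/2) ^ (1/β)) with ht
  have ht0 : 0 < t := lt_min (by norm_num) (Real.rpow_pos_of_pos (half_pos hM) _)
  have ht1 : t < 1 := lt_of_le_of_lt (min_le_left _ _) (by norm_num)
  have hr := h (R0 * t) (mul_pos hR0 ht0) (by nlinarith)
  have hdiv : R0 / (R0 * t) = t⁻¹ := by field_simp
  rw [hdiv] at hr
  have htβ : t ^ β ≤ M / 2 := by
    calc t ^ β ≤ ((M/2) ^ (1/β)) ^ β :=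
          Real.rpow_le_rpow ht0.le (min_le_right _ _) hβ
      _ = M / 2 := by
          rw [← Real.rpow_mul (half_pos hM).le, one_div_mul_cancel hβpos.ne', Real.rpow_one]
  rw [Real.inv_rpow ht0.le] at hr
  have htp : 0 < t ^ β := Real.rpow_pos_of_pos ht0 β
  have : M ≤ t ^ β := by
    rw [← div_eq_mul_inv, div_le_one htp] at hr
    exact hr
  nlinarith

lemma lowerDimSet_eq_zero {E : Set ℝ} {p R0 : ℝ} (hp : p ∈ E) (hR0 : 0 < R0)
    (hiso : Metric.closedBall p R0 ∩ E ⊆ {p}) (hdiam : R0 ≤ Metric.diam E) :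
    lowerDimSet E = 0 := by
  have hsub : {β : ℝ | 0 ≤ β ∧ ∃ M : ℝ, 0 < M ∧ ∀ x ∈ E, ∀ R r : ℝ, 0 < r → r < R →
      R ≤ Metric.diam E →
      M * (R / r) ^ β ≤ (coverNum (Metric.closedBall x R ∩ E) r : ℝ)} ⊆ {0} := by
    rintro β ⟨hβ, M, hM, h⟩
    have : β = 0 := by
      apply beta_eq_zero hβ hM hR0
      intro r hr hrR0
      have h1 := h p hp R0 r hr hrR0 hdiam
      have h2 : coverNum (Metric.closedBall p R0 ∩ E) r ≤ 1 := coverNum_le_one hiso hr.le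
      calc M * (R0 / r) ^ β ≤ (coverNum (Metric.closedBall p R0 ∩ E) r : ℝ) := h1
        _ ≤ 1 := by exact_mod_cast h2
    simpa using this
  unfold lowerDimSet
  rcases Set.subset_singleton_iff_eq.mp hsub with h | h <;> rw [h]
  · exact Real.sSup_empty
  · exact csSup_singleton 0

/-- Compact subsets of `ℝ` whose Hausdorff dimension differs from their lower dimension
are dense in the space of nonempty compact subsets of `ℝ` with the Hausdorff metric. -/
theorem dimH_ne_lowerDim_dense :
    Dense {K : TopologicalSpace.NonemptyCompacts ℝ |
      dimH (K : Set ℝ) ≠ ENNReal.ofReal (lowerDimSet (K : Set ℝ))} := by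
  rw [Metric.dense_iff]
  intro K ε hε
  obtain ⟨t, htK, htfin, hcover⟩ :=
    finite_approx_of_totallyBounded K.isCompact.totallyBounded (ε/3) (by linarith)
  have htne : t.Nonempty := by
    rcases K.nonempty with ⟨x, hx⟩
    rcases Set.mem_iUnion₂.mp (hcover hx) with ⟨y, hy, -⟩
    exact ⟨y, hy⟩
  set a := sInf t with ha
  have hat : a ∈ t := htne.csInf_mem htfin
  have hale : ∀ y ∈ t, a ≤ y := fun y hy => csInf_le htfin.bddBelow hy
  set p := a - ε/3 with hp
  set K' : Set ℝ := insert p (Set.Icc a (a + ε/3) ∪ t) with hK'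
  have hpK' : p ∈ K' := Set.mem_insert _ _
  have haK' : a ∈ K' := Set.mem_insert_of_mem _ (Or.inl ⟨le_rfl, by linarith⟩)
  have hcomp : IsCompact K' := (isCompact_Icc.union htfin.isCompact).insert p
  -- every non-p point of K' is ≥ a
  have hge : ∀ q ∈ K', q ≠ p → a ≤ q := by
    rintro q hq hqp
    rcases hq with rfl | hq
    · exact absurd rfl hqp
    rcases hq with hq | hq
    · exact hq.1
    · exact hale q hq
  -- isolation
  have hiso : Metric.closedBall p (ε/6) ∩ K' ⊆ {p} := by
    rintro q ⟨hq1, hq2⟩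
    by_contra hqp
    simp only [Set.mem_singleton_iff] at hqp
    have h1 : a ≤ q := hge q hq2 hqp
    have h2 : dist q p ≤ ε/6 := mem_closedBall.mp hq1
    rw [Real.dist_eq, abs_le] at h2
    have : q - p ≥ ε/3 := by simp only [hp]; linarith
    linarith [h2.2]
  have hdiam : ε/6 ≤ Metric.diam K' := by
    have := Metric.dist_le_diam_of_mem hcomp.isBounded hpK' haK'
    rw [Real.dist_eq] at this
    have : ε/3 ≤ Metric.diam K' := by
      have h3 : |p - a| = ε/3 := by rw [hp]; rw [abs_of_nonpos (by linarith)]; ring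
      linarith [h3 ▸ this]
    linarith
  have hlds : lowerDimSet K' = 0 := lowerDimSet_eq_zero hpK' (by linarith) hiso hdiam
  have hdimH : dimH K' = 1 := by
    have hsub2 : Set.Icc a (a + ε/3) ⊆ K' := fun x hx => Set.mem_insert_of_mem _ (Or.inl hx)
    have hint : (interior K').Nonempty := by
      refine ⟨a + ε/6, interior_mono hsub2 ?_⟩
      rw [interior_Icc]
      exact ⟨by linarith, by linarith⟩
    have := Real.dimH_of_nonempty_interior hint
    simpa using this
  set Kc : TopologicalSpace.NonemptyCompacts ℝ := ⟨⟨K', hcomp⟩, ⟨p, hpK'⟩⟩ with hKc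
  refine ⟨Kc, ?_, ?_⟩
  · rw [mem_ball]
    have : dist Kc K = Metric.hausdorffDist K' (K : Set ℝ) := rfl
    rw [this]
    have hd : Metric.hausdorffDist K' (K : Set ℝ) ≤ ε/3 := by
      apply Metric.hausdorffDist_le_of_mem_dist (by linarith)
      · rintro x (rfl | hx | hx)
        · refine ⟨a, htK hat, ?_⟩
          rw [Real.dist_eq, hp, show a - ε/3 - a = -(ε/3) by ring, abs_neg,
            abs_of_nonneg (by linarith)]
        · refine ⟨a, htK hat, ?_⟩
          rw [Real.dist_eq, abs_of_nonneg (by linarith [hx.1])]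
          linarith [hx.2]
        · exact ⟨x, htK hx, by rw [dist_self]; linarith⟩
      · intro y hy
        rcases Set.mem_iUnion₂.mp (hcover hy) with ⟨z, hz, hyz⟩
        exact ⟨z, Set.mem_insert_of_mem _ (Or.inr hz), by
          exact (mem_ball.mp hyz).le⟩
    linarith
  · show dimH (Kc : Set ℝ) ≠ ENNReal.ofReal (lowerDimSet (Kc : Set ℝ))
    have hcoe : (Kc : Set ℝ) = K' := rfl
    rw [hcoe, hdimH, hlds]
    simp
end

section
/- Let ϑ be a finite Borel measure on ℝ^m whose quantization dimension of order r exists, and let θ = Σ_{i=1}^k a_i δ_{x_i} be a finite convex combination of Dirac measures on ℝ^m. Then D_r(ϑ * θ) = D_r(ϑ). -/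
open MeasureTheory Metric Filter Topology

/-! ### Auxiliary analytic lemmas -/

lemma ratio_log_tendsto_one {c : ℝ} :
    Tendsto (fun n : ℕ => Real.log n / (Real.log n - c)) atTop (nhds 1) := by
  have h1 : Tendsto (fun n : ℕ => Real.log n - c) atTop atTop :=
    (tendsto_atTop_add_const_right _ (-c)
      (Real.tendsto_log_atTop.comp tendsto_natCast_atTop_atTop)).congr
        (fun n => by simp [Function.comp_def, sub_eq_add_neg, add_comm])
  have h2 : Tendsto (fun n : ℕ => c / (Real.log n - c)) atTop (nhds 0) :=
    Tendsto.div_atTop tendsto_const_nhds h1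
  have h3 : Tendsto (fun n : ℕ => 1 + c / (Real.log n - c)) atTop (nhds (1 + 0)) :=
    tendsto_const_nhds.add h2
  rw [add_zero] at h3
  apply h3.congr'
  filter_upwards [h1.eventually_gt_atTop 0] with n hn
  field_simp
  ring

lemma nat_div_tendsto_atTop {k : ℕ} (hk : 1 ≤ k) :
    Tendsto (fun n : ℕ => n / k) atTop atTop := by
  apply tendsto_atTop_atTop.2
  intro b
  refine ⟨k * b, fun n hn => (Nat.le_div_iff_mul_le (by omega)).2 ?_⟩
  calc b * k = k * b := mul_comm b k
    _ ≤ n := hn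

lemma tendsto_of_eventually_log_zero {r D : ℝ} {e f : ℕ → ℝ}
    (hlim : Tendsto (fun n : ℕ => r * Real.log n / (- Real.log (e n))) atTop (nhds D))
    (he : ∀ᶠ n : ℕ in atTop, Real.log (e n) = 0)
    (hf : ∀ᶠ n : ℕ in atTop, Real.log (f n) = 0) :
    Tendsto (fun n : ℕ => r * Real.log n / (- Real.log (f n))) atTop (nhds D) := by
  have he' : (fun n : ℕ => r * Real.log n / (- Real.log (e n))) =ᶠ[atTop] (fun _ => (0:ℝ)) := by
    filter_upwards [he] with n hn; simp [hn]
  have hD : D = 0 := tendsto_nhds_unique hlim ((tendsto_const_nhds).congr' he'.symm)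
  have hf' : (fun n : ℕ => r * Real.log n / (- Real.log (f n))) =ᶠ[atTop] (fun _ => (0:ℝ)) := by
    filter_upwards [hf] with n hn; simp [hn]
  rw [hD]
  exact (tendsto_const_nhds).congr' hf'.symm

lemma sandwich_qdim {r D : ℝ} (hr : 0 < r) {e f : ℕ → ℝ} {k : ℕ} (hk : 1 ≤ k)
    (he0 : ∀ n, 0 ≤ e n) (hf0 : ∀ n, 0 ≤ f n)
    (hemono : ∀ m n : ℕ, 1 ≤ m → m ≤ n → e n ≤ e m)
    (hfmono : ∀ m n : ℕ, 1 ≤ m → m ≤ n → f n ≤ f m)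
    (hge : ∀ n : ℕ, 1 ≤ n → e n ≤ f n)
    (hle : ∀ n : ℕ, 1 ≤ n → f (k * n) ≤ e n)
    (hlim : Tendsto (fun n : ℕ => r * Real.log n / (- Real.log (e n))) atTop (nhds D)) :
    Tendsto (fun n : ℕ => r * Real.log n / (- Real.log (f n))) atTop (nhds D) := by
  -- f is sandwiched: e n ≤ f n ≤ e (n / k) for n ≥ k
  have hfe : ∀ n : ℕ, k ≤ n → f n ≤ e (n / k) := by
    intro n hn
    have h1 : 1 ≤ n / k := (Nat.one_le_div_iff (by omega)).2 hn
    have h2 : k * (n / k) ≤ n := Nat.mul_div_le n k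
    exact (hfmono (k * (n / k)) n (by nlinarith) h2).trans (hle (n / k) h1)
  by_cases hzero : ∃ N : ℕ, 1 ≤ N ∧ e N = 0
  · obtain ⟨N, hN1, heN⟩ := hzero
    apply tendsto_of_eventually_log_zero hlim
    · filter_upwards [eventually_ge_atTop N] with n hn
      have : e n ≤ 0 := heN ▸ hemono N n hN1 hn
      have : e n = 0 := le_antisymm this (he0 n)
      simp [this]
    · filter_upwards [eventually_ge_atTop (k * N)] with n hn
      have h1 : f n ≤ f (k * N) := hfmono (k * N) n (by nlinarith) hn
      have h2 : f (k * N) ≤ e N := hle N hN1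
      have : f n = 0 := le_antisymm (by rw [← heN] at *; linarith) (hf0 n)
      simp [this]
  · push_neg at hzero
    have hepos : ∀ n : ℕ, 1 ≤ n → 0 < e n := fun n hn => (he0 n).lt_of_ne' (hzero n hn)
    by_cases hone : ∀ n : ℕ, 1 ≤ n → 1 < e n
    · -- contradiction with hlim
      exfalso
      have hc1 : 0 < Real.log (e 1) := Real.log_pos (hone 1 le_rfl)
      have hg : Tendsto (fun n : ℕ => -(r * Real.log n / Real.log (e 1))) atTop atBot := by
        apply tendsto_neg_atBot_iff.2
        apply Tendsto.atTop_div_const hc1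
        exact (Real.tendsto_log_atTop.comp tendsto_natCast_atTop_atTop).const_mul_atTop hr
      have hbot : Tendsto (fun n : ℕ => r * Real.log n / (- Real.log (e n))) atTop atBot := by
        apply tendsto_atBot_mono' atTop _ hg
        filter_upwards [eventually_ge_atTop 1] with n hn
        have h1 : 0 < Real.log (e n) := Real.log_pos (hone n hn)
        have h2 : Real.log (e n) ≤ Real.log (e 1) :=
          Real.log_le_log (hepos n hn) (hemono 1 n le_rfl hn)
        have h3 : 0 ≤ r * Real.log n := by
          have : (0:ℝ) ≤ Real.log n := Real.log_natCast_nonneg n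
          positivity
        have h4 : r * Real.log n / Real.log (e 1) ≤ r * Real.log n / Real.log (e n) :=
          div_le_div_of_nonneg_left h3 h1 h2
        calc r * Real.log n / (- Real.log (e n)) = -(r * Real.log n / Real.log (e n)) := by
              rw [div_neg]
          _ ≤ -(r * Real.log n / Real.log (e 1)) := neg_le_neg h4
      exact not_tendsto_atBot_of_tendsto_nhds hlim hbot
    · push_neg at hone
      obtain ⟨N, hN1, heN⟩ := hone
      by_cases hlt : ∃ M : ℕ, 1 ≤ M ∧ e M < 1
      · clear heN hN1 N
        obtain ⟨M, hM1, heM⟩ := hlt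
        set L := fun n : ℕ => r * Real.log n / (- Real.log (e n)) with hL
        set U := fun n : ℕ => r * Real.log n / (- Real.log (e (n / k))) with hU
        set n₀ := k * (M + 2) + 2 * k with hn₀
        -- basic eventual facts
        have hkey : ∀ n : ℕ, n₀ ≤ n →
            (M ≤ n ∧ M ≤ n / k ∧ 2 ≤ n / k ∧ 2 * k ≤ n ∧ 2 ≤ n ∧ 2 * k < n) := by
          intro n hn
          have hP : k * (M + 2) ≤ n := le_trans (Nat.le_add_right _ _) hn
          have h2k : 2 * k ≤ n := le_trans (Nat.le_add_left _ _) hn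
          have h2 : M + 2 ≤ n / k := by
            refine (Nat.le_div_iff_mul_le (by omega)).2 ?_
            calc (M + 2) * k = k * (M + 2) := mul_comm _ _
              _ ≤ n := hP
          have h3 : n / k ≤ n := Nat.div_le_self n k
          have hpos : 0 < k * (M + 2) := Nat.mul_pos (by omega) (by omega)
          refine ⟨by omega, by omega, by omega, h2k, by omega, by omega⟩
        -- U tends to D
        have hUlim : Tendsto U atTop (nhds D) := by
          have hcomp : Tendsto (fun n : ℕ => L (n / k)) atTop (nhds D) :=
            hlim.comp (nat_div_tendsto_atTop hk)
          have hratio : Tendsto (fun n : ℕ => Real.log n / Real.log (n / k : ℕ)) atTop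
              (nhds 1) := by
            have hup : ∀ n : ℕ, n₀ ≤ n →
                Real.log n / Real.log (n / k : ℕ) ≤
                  Real.log n / (Real.log n - Real.log (2 * k)) := by
              intro n hn
              obtain ⟨h1, h2, h3, h4, h5, h6⟩ := hkey n hn
              have hdivbound : ((n : ℝ)) ≤ 2 * k * ((n / k : ℕ) : ℝ) := by
                have hq : 1 ≤ n / k := le_trans one_le_two h3
                have hmod : n % k < k := Nat.mod_lt n (by omega)
                have hkq : k ≤ k * (n / k) := Nat.le_mul_of_pos_right k (by omega)
                have : n ≤ 2 * k * (n / k) := by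
                  calc n = k * (n / k) + n % k := (Nat.div_add_mod n k).symm
                    _ ≤ k * (n / k) + k * (n / k) := by omega
                    _ = 2 * k * (n / k) := by ring
                exact_mod_cast this
              have hlogup : Real.log n - Real.log (2 * k) ≤ Real.log (n / k : ℕ) := by
                have h2k : (0:ℝ) < 2 * k := by positivity
                have hq0 : (0:ℝ) < ((n / k : ℕ) : ℝ) := by
                  have : 1 ≤ n / k := le_trans one_le_two h3
                  exact_mod_cast Nat.lt_of_lt_of_le Nat.zero_lt_one this
                rw [sub_le_iff_le_add, ← Real.log_mul (by positivity) (by positivity)]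
                apply Real.log_le_log (by positivity)
                calc (n:ℝ) ≤ 2 * k * ((n / k : ℕ) : ℝ) := hdivbound
                  _ = ((n / k : ℕ) : ℝ) * (2 * k) := by ring
              have hpos : 0 < Real.log n - Real.log (2 * k) := by
                have : Real.log (2 * k) < Real.log n := by
                  apply Real.log_lt_log (by positivity)
                  exact_mod_cast h6
                linarith
              exact div_le_div_of_nonneg_left (Real.log_natCast_nonneg n) hpos hlogup
            have hlo : ∀ n : ℕ, n₀ ≤ n → 1 ≤ Real.log n / Real.log (n / k : ℕ) := by
              intro n hn
              obtain ⟨h1, h2, h3, h4, h5, h6⟩ := hkey n hn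
              have hq : 0 < Real.log (n / k : ℕ) := by
                apply Real.log_pos
                exact_mod_cast Nat.lt_of_lt_of_le Nat.one_lt_two h3
              rw [le_div_iff₀ hq, one_mul]
              apply Real.log_le_log (by positivity)
              have : n / k ≤ n := Nat.div_le_self n k
              exact_mod_cast this
            refine tendsto_of_tendsto_of_tendsto_of_le_of_le' tendsto_const_nhds
              (ratio_log_tendsto_one (c := Real.log (2 * k))) ?_ ?_
            · filter_upwards [eventually_ge_atTop n₀] with n hn using hlo n hn
            · filter_upwards [eventually_ge_atTop n₀] with n hn using hup n hn
          have hmul : Tendsto (fun n : ℕ => L (n / k) * (Real.log n / Real.log (n / k : ℕ)))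
              atTop (nhds D) := by
            have := hcomp.mul hratio
            rwa [mul_one] at this
          apply hmul.congr'
          filter_upwards [eventually_ge_atTop n₀] with n hn
          obtain ⟨h1, h2, h3, h4, h5, h6⟩ := hkey n hn
          have hq : 0 < Real.log (n / k : ℕ) := by
            apply Real.log_pos
            exact_mod_cast Nat.lt_of_lt_of_le Nat.one_lt_two h3
          have hq' : Real.log ((n / k : ℕ) : ℝ) ≠ 0 := ne_of_gt hq
          by_cases hz : Real.log (e (n / k)) = 0
          · simp [hL, hU, hz]
          · simp only [hL, hU, div_neg, neg_mul, neg_inj, div_eq_mul_inv, mul_inv]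
            field_simp
        -- squeeze
        refine tendsto_of_tendsto_of_tendsto_of_le_of_le' hlim hUlim ?_ ?_
        · filter_upwards [eventually_ge_atTop n₀] with n hn
          obtain ⟨h1, h2, h3, h4, h5, h6⟩ := hkey n hn
          have hen : 0 < e n := hepos n (by omega)
          have hfn : 0 < f n := lt_of_lt_of_le hen (hge n (by omega))
          have hf1 : f n < 1 := by
            have := hfe n (by omega)
            have h7 : e (n / k) ≤ e M := hemono M (n / k) hM1 h2
            linarith
          have he1 : e n < 1 := lt_of_le_of_lt (hge n (by omega)) hf1
          have hde : 0 < - Real.log (e n) := by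
            have := Real.log_neg hen he1; linarith
          have hdf : 0 < - Real.log (f n) := by
            have := Real.log_neg hfn hf1; linarith
          have hdd : - Real.log (f n) ≤ - Real.log (e n) := by
            have := Real.log_le_log hen (hge n (by omega)); linarith
          have h3' : 0 ≤ r * Real.log n := by
            have : (0:ℝ) ≤ Real.log n := Real.log_natCast_nonneg n
            positivity
          exact div_le_div_of_nonneg_left h3' hdf hdd
        · filter_upwards [eventually_ge_atTop n₀] with n hn
          obtain ⟨h1, h2, h3, h4, h5, h6⟩ := hkey n hn
          have hen : 0 < e (n / k) := hepos (n / k) (by omega)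
          have hfn : 0 < f n := lt_of_lt_of_le (hepos n (by omega)) (hge n (by omega))
          have hfe' : f n ≤ e (n / k) := hfe n (by omega)
          have he1 : e (n / k) < 1 := by
            have h7 : e (n / k) ≤ e M := hemono M (n / k) hM1 h2
            linarith
          have hde : 0 < - Real.log (e (n / k)) := by
            have := Real.log_neg hen he1; linarith
          have hdd : - Real.log (e (n / k)) ≤ - Real.log (f n) := by
            have := Real.log_le_log hfn hfe'; linarith
          have h3' : 0 ≤ r * Real.log n := by
            have : (0:ℝ) ≤ Real.log n := Real.log_natCast_nonneg n
            positivity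
          exact div_le_div_of_nonneg_left h3' hde hdd
      · -- e n ≥ 1 always, and e N ≤ 1 hence e n = 1 for n ≥ N
        push_neg at hlt
        apply tendsto_of_eventually_log_zero hlim
        · filter_upwards [eventually_ge_atTop N] with n hn
          have h1 : e n ≤ e N := hemono N n hN1 hn
          have h2 : 1 ≤ e n := hlt n (hN1.trans hn)
          have : e n = 1 := le_antisymm (h1.trans heN) h2
          simp [this]
        · filter_upwards [eventually_ge_atTop (k * N)] with n hn
          have h1 : f n ≤ e (n / k) := hfe n (by nlinarith)
          have h2 : N ≤ n / k := (Nat.le_div_iff_mul_le (by omega)).2 (by nlinarith)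
          have h3 : e (n / k) ≤ e N := hemono N (n / k) hN1 h2
          have h4 : e n ≤ f n := hge n (by nlinarith)
          have h5 : 1 ≤ e n := hlt n (by nlinarith)
          have : f n = 1 := le_antisymm (h1.trans (h3.trans heN)) (h5.trans h4)
          simp [this]

/-! ### Auxiliary measure-theoretic lemmas -/

section Aux

variable {X : Type*} [DecidableEq X] [NormedAddCommGroup X] [MeasurableSpace X] [BorelSpace X]
  [SecondCountableTopology X]

/-- The quantization integrand. -/
noncomputable def qf (r : ℝ) (A : Finset X) : X → ℝ := fun y => infDist y (A : Set X) ^ r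

lemma qf_nonneg (r : ℝ) (A : Finset X) (y : X) : 0 ≤ qf r A y :=
  Real.rpow_nonneg infDist_nonneg r

lemma qf_continuous (r : ℝ) (hr : 0 ≤ r) (A : Finset X) : Continuous (qf r A) :=
  (continuous_infDist_pt (A : Set X)).rpow_const (fun _ => Or.inr hr)

lemma rpow_add_le {s t r : ℝ} (hs : 0 ≤ s) (ht : 0 ≤ t) (hr : 0 ≤ r) :
    (s + t) ^ r ≤ 2 ^ r * (s ^ r + t ^ r) := by
  have h1 : s + t ≤ 2 * max s t := by
    rcases le_total s t with h | h
    · simp [two_mul]; nlinarith [le_max_right s t]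
    · nlinarith [le_max_left s t]
  calc (s + t) ^ r ≤ (2 * max s t) ^ r :=
        Real.rpow_le_rpow (by positivity) h1 hr
    _ = 2 ^ r * (max s t) ^ r := Real.mul_rpow (by norm_num) (le_max_of_le_left hs)
    _ ≤ 2 ^ r * (s ^ r + t ^ r) := by
        have : (max s t) ^ r ≤ s ^ r + t ^ r := by
          rcases le_total s t with h | h
          · rw [max_eq_right h]; nlinarith [Real.rpow_nonneg hs r]
          · rw [max_eq_left h]; nlinarith [Real.rpow_nonneg ht r]
        have h2 : (0:ℝ) ≤ 2 ^ r := Real.rpow_nonneg (by norm_num) r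
        nlinarith

/-- comparison of infDist to two finite nonempty sets -/
lemma infDist_le_infDist_add_const {A B : Finset X} (hA : A.Nonempty) (hB : B.Nonempty)
    (y : X) :
    infDist y (A : Set X) ≤ infDist y (B : Set X) + B.sup' hB (fun b => dist b (hA.choose)) := by
  obtain ⟨b, hb, hbd⟩ := B.finite_toSet.isCompact.exists_infDist_eq_dist (by exact_mod_cast hB) y
  have ha : hA.choose ∈ (A : Set X) := by exact_mod_cast hA.choose_spec
  calc infDist y (A : Set X) ≤ dist y hA.choose := infDist_le_dist_of_mem ha
    _ ≤ dist y b + dist b hA.choose := dist_triangle _ _ _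
    _ ≤ infDist y (B : Set X) + B.sup' hB (fun b => dist b (hA.choose)) := by
        rw [hbd]
        gcongr
        exact Finset.le_sup' (fun b => dist b (hA.choose)) (by exact_mod_cast hb)

/-- transfer of integrability between quantization integrands -/
lemma qf_integrable_of_qf_integrable {r : ℝ} (hr : 0 ≤ r) {μ : Measure X} [IsFiniteMeasure μ]
    {A B : Finset X} (hA : A.Nonempty) (hB : B.Nonempty)
    (h : Integrable (qf r B) μ) : Integrable (qf r A) μ := by
  set C := B.sup' hB (fun b => dist b (hA.choose)) with hC
  have hC0 : 0 ≤ C :=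
    le_trans dist_nonneg (Finset.le_sup' (fun b => dist b (hA.choose)) hB.choose_spec)
  have hbound : ∀ y, ‖qf r A y‖ ≤ 2 ^ r * (qf r B y + C ^ r) := by
    intro y
    rw [Real.norm_of_nonneg (qf_nonneg r A y)]
    calc qf r A y ≤ (infDist y (B : Set X) + C) ^ r := by
          exact Real.rpow_le_rpow infDist_nonneg (infDist_le_infDist_add_const hA hB y) hr
      _ ≤ 2 ^ r * (qf r B y + C ^ r) := rpow_add_le infDist_nonneg hC0 hr
  exact Integrable.mono' (((h.add (integrable_const _)).const_mul _))
    ((qf_continuous r hr A).aestronglyMeasurable) (Filter.Eventually.of_forall hbound)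

lemma infDist_add_right' (y c : X) (s : Set X) :
    infDist (y + c) ((fun a => a + c) '' s) = infDist y s :=
  infDist_image (Isometry.of_dist_eq fun a b => dist_add_right a b c)

lemma qf_comp_add (r : ℝ) (A : Finset X) (c : X) (y : X) :
    qf r A (y + c) = qf r (A.image (fun a => a - c)) y := by
  unfold qf
  congr 1
  have : (A : Set X) = (fun a => a + c) '' ((A.image (fun a => a - c) : Finset X) : Set X) := by
    rw [Finset.coe_image, ← Set.image_comp]
    simp [Function.comp_def]
  rw [this, infDist_add_right']

lemma qf_comp_add_eq (r : ℝ) (A : Finset X) (c : X) :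
    (qf r A ∘ fun y => y + c) = qf r (A.image (fun a => a - c)) :=
  funext fun y => qf_comp_add r A c y

lemma qf_comp_add' (r : ℝ) (A : Finset X) (c : X) (y : X) :
    qf r (A.image (fun a => a + c)) (y + c) = qf r A y := by
  rw [qf_comp_add]
  congr 2
  rw [Finset.image_image]
  simp only [Function.comp_def, add_sub_cancel_right, Finset.image_id']

lemma qf_anti_subset {r : ℝ} (hr : 0 ≤ r) {A B : Finset X} (hA : A.Nonempty) (hAB : A ⊆ B)
    (y : X) : qf r B y ≤ qf r A y := by
  apply Real.rpow_le_rpow infDist_nonneg _ hr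
  refine infDist_le_infDist_of_subset ?_ (by exact_mod_cast hA)
  exact_mod_cast hAB

/-- key structure: convolution with a finite combination of Diracs is a combination of
translates -/
lemma mconv_eq_sum (ϑ : Measure X) [SFinite ϑ] {k : ℕ} (a : Fin k → ENNReal)
    (x : Fin k → X) :
    mconv ϑ (∑ i, a i • Measure.dirac (x i)) = ∑ i, a i • ϑ.map (fun y => y + x i) := by
  haveI : SFinite (∑ i, a i • Measure.dirac (x i)) := by
    rw [← Measure.sum_fintype]
    infer_instance
  ext s hs
  have hadd : Measurable (fun p : X × X => p.1 + p.2) := measurable_add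
  rw [mconv, Measure.map_apply hadd hs, Measure.prod_apply (hadd hs)]
  have h1 : ∀ y : X, (fun z => (y, z)) ⁻¹' ((fun p : X × X => p.1 + p.2) ⁻¹' s)
      = (fun z => y + z) ⁻¹' s := by intro y; rfl
  simp only [h1]
  have h2 : ∀ y : X, (∑ i, a i • Measure.dirac (x i)) ((fun z => y + z) ⁻¹' s)
      = ∑ i, a i * s.indicator 1 (y + x i) := by
    intro y
    rw [Measure.finset_sum_apply]
    refine Finset.sum_congr rfl fun i _ => ?_
    rw [Measure.smul_apply, Measure.dirac_apply' _ (measurable_const_add y hs),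
      smul_eq_mul]
    rfl
  simp only [h2]
  rw [lintegral_finset_sum]
  · rw [Measure.finset_sum_apply]
    refine Finset.sum_congr rfl fun i _ => ?_
    rw [lintegral_const_mul]
    · rw [Measure.smul_apply, smul_eq_mul, Measure.map_apply (measurable_add_const (x i)) hs]
      congr 1
      rw [← lintegral_indicator_one (measurable_add_const (x i) hs)]
      rfl
    · exact (measurable_one.indicator hs).comp (measurable_add_const (x i))
  · intro i _
    exact (measurable_const.mul ((measurable_one.indicator hs).comp (measurable_add_const (x i))))

variable (ϑ : Measure X) {k : ℕ} (a : Fin k → ENNReal) (x : Fin k → X) {r : ℝ}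

lemma integrable_qf_sum_iff (ha : ∀ i, a i ≠ 0) (ha' : ∀ i, a i ≠ ⊤) (A : Finset X) :
    Integrable (qf r A) (∑ i, a i • ϑ.map (fun y => y + x i)) ↔
      ∀ i, Integrable (qf r (A.image (fun y => y - x i))) ϑ := by
  rw [integrable_finset_sum_measure]
  simp only [Finset.mem_univ, true_implies]
  refine forall_congr' fun i => ?_
  rw [integrable_smul_measure (ha i) (ha' i),
    (measurableEmbedding_addRight (x i)).integrable_map_iff, qf_comp_add_eq]

lemma integral_qf_sum (hr : 0 ≤ r) (ha : ∀ i, a i ≠ 0) (ha' : ∀ i, a i ≠ ⊤) (A : Finset X)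
    (hInt : ∀ i, Integrable (qf r (A.image (fun y => y - x i))) ϑ) :
    ∫ y, qf r A y ∂(∑ i, a i • ϑ.map (fun y => y + x i))
      = ∑ i, (a i).toReal * ∫ y, qf r (A.image (fun z => z - x i)) y ∂ϑ := by
  rw [integral_finset_sum_measure]
  · refine Finset.sum_congr rfl fun i _ => ?_
    rw [integral_smul_measure, smul_eq_mul]
    congr 1
    rw [integral_map (measurable_add_const (x i)).aemeasurable
      (((qf_continuous r hr A).aestronglyMeasurable))]
    exact integral_congr_ae (Filter.Eventually.of_forall fun y => qf_comp_add r A (x i) y)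
  · intro i _
    refine ((integrable_smul_measure (ha i) (ha' i))).2 ?_
    rw [(measurableEmbedding_addRight (x i)).integrable_map_iff, qf_comp_add_eq]
    exact hInt i

/-! ### quantErr lemmas -/

lemma quantErr_set_bddBelow (μ : Measure X) (n : ℕ) (r : ℝ) :
    BddBelow {v : ℝ | ∃ A : Finset X, A.Nonempty ∧ A.card ≤ n ∧
      v = ∫ x, Metric.infDist x (A : Set X) ^ r ∂μ} := by
  refine ⟨0, fun v hv => ?_⟩
  obtain ⟨A, -, -, rfl⟩ := hv
  exact integral_nonneg fun y => Real.rpow_nonneg infDist_nonneg r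

lemma quantErr_nonneg (μ : Measure X) (n : ℕ) (r : ℝ) : 0 ≤ quantErr μ n r := by
  apply Real.sInf_nonneg
  rintro v ⟨A, -, -, rfl⟩
  exact integral_nonneg fun y => Real.rpow_nonneg infDist_nonneg r

lemma quantErr_le (μ : Measure X) {n : ℕ} (r : ℝ) {A : Finset X} (hA : A.Nonempty)
    (hcard : A.card ≤ n) :
    quantErr μ n r ≤ ∫ y, qf r A y ∂μ :=
  csInf_le (quantErr_set_bddBelow μ n r) ⟨A, hA, hcard, rfl⟩

lemma le_quantErr [Nonempty X] (μ : Measure X) {n : ℕ} (r : ℝ) {c : ℝ} (hn : 1 ≤ n)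
    (h : ∀ A : Finset X, A.Nonempty → A.card ≤ n → c ≤ ∫ y, qf r A y ∂μ) :
    c ≤ quantErr μ n r := by
  apply le_csInf
  · exact ⟨_, {Classical.arbitrary X}, Finset.singleton_nonempty _,
      by simpa using hn, rfl⟩
  · rintro v ⟨A, hA, hcard, rfl⟩
    exact h A hA hcard

lemma quantErr_antitone [Nonempty X] (μ : Measure X) (r : ℝ) {n m : ℕ} (hn : 1 ≤ n)
    (hnm : n ≤ m) : quantErr μ m r ≤ quantErr μ n r := by
  apply le_quantErr μ r hn
  intro A hA hcard
  exact quantErr_le μ r hA (hcard.trans hnm)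

lemma quantErr_eq_zero (μ : Measure X) {n : ℕ} (r : ℝ)
    (h : ∀ A : Finset X, A.Nonempty → ¬ Integrable (qf r A) μ) :
    quantErr μ n r = 0 := by
  rcases Nat.eq_zero_or_pos n with hn | hn
  · subst hn
    have : {v : ℝ | ∃ A : Finset X, A.Nonempty ∧ A.card ≤ 0 ∧
        v = ∫ x, Metric.infDist x (A : Set X) ^ r ∂μ} = ∅ := by
      ext v
      simp only [Set.mem_setOf_eq, Set.mem_empty_iff_false, iff_false]
      rintro ⟨A, hA, hcard, -⟩
      simp [Finset.card_eq_zero.mp (Nat.le_zero.mp hcard)] at hA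
    rw [quantErr, this, Real.sInf_empty]
  · have : {v : ℝ | ∃ A : Finset X, A.Nonempty ∧ A.card ≤ n ∧
        v = ∫ x, Metric.infDist x (A : Set X) ^ r ∂μ} ⊆ {0} := by
      rintro v ⟨A, hA, -, rfl⟩
      simp only [Set.mem_singleton_iff]
      exact integral_undef (h A hA)
    rcases Set.subset_singleton_iff_eq.mp this with h0 | h0
    · rw [quantErr, h0, Real.sInf_empty]
    · rw [quantErr, h0, csInf_singleton]

/-! ### the two quantization-error inequalities -/

lemma quantErr_conv_ge [Nonempty X] [IsFiniteMeasure ϑ] (hr : 0 < r) (hk : 0 < k)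
    (ha : ∀ i, a i ≠ 0) (ha' : ∀ i, a i ≠ ⊤) (hsum : ∑ i, (a i).toReal = 1)
    {n : ℕ} (hn : 1 ≤ n) :
    quantErr ϑ n r ≤ quantErr (∑ i, a i • ϑ.map (fun y => y + x i)) n r := by
  by_cases hcase : ∀ B : Finset X, B.Nonempty → Integrable (qf r B) ϑ
  · apply le_quantErr _ r hn
    intro A hA hcard
    have hI : ∀ i, Integrable (qf r (A.image (fun y => y - x i))) ϑ :=
      fun i => hcase _ (hA.image _)
    rw [integral_qf_sum ϑ a x hr.le ha ha' A hI]
    calc quantErr ϑ n r = ∑ i, (a i).toReal * quantErr ϑ n r := by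
          rw [← Finset.sum_mul, hsum, one_mul]
      _ ≤ ∑ i, (a i).toReal * ∫ y, qf r (A.image (fun z => z - x i)) y ∂ϑ := by
          refine Finset.sum_le_sum fun i _ => ?_
          refine mul_le_mul_of_nonneg_left ?_ ENNReal.toReal_nonneg
          exact quantErr_le ϑ r (hA.image _) ((Finset.card_image_le).trans hcard)
  · push_neg at hcase
    obtain ⟨B0, hB0ne, hB0⟩ := hcase
    have hϑzero : ∀ A : Finset X, A.Nonempty → ¬ Integrable (qf r A) ϑ := by
      intro A hA h
      exact hB0 (qf_integrable_of_qf_integrable hr.le hB0ne hA h)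
    have hνzero : ∀ A : Finset X, A.Nonempty →
        ¬ Integrable (qf r A) (∑ i, a i • ϑ.map (fun y => y + x i)) := by
      intro A hA h
      rw [integrable_qf_sum_iff ϑ a x ha ha' A] at h
      exact hϑzero _ (hA.image _) (h ⟨0, hk⟩)
    rw [quantErr_eq_zero ϑ r hϑzero, quantErr_eq_zero _ r hνzero]

lemma quantErr_conv_le [Nonempty X] [IsFiniteMeasure ϑ] (hr : 0 < r) (hk : 0 < k)
    (ha : ∀ i, a i ≠ 0) (ha' : ∀ i, a i ≠ ⊤) (hsum : ∑ i, (a i).toReal = 1)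
    {n : ℕ} (hn : 1 ≤ n) :
    quantErr (∑ i, a i • ϑ.map (fun y => y + x i)) (k * n) r ≤ quantErr ϑ n r := by
  by_cases hcase : ∀ B : Finset X, B.Nonempty → Integrable (qf r B) ϑ
  · apply le_quantErr _ r hn
    intro A hA hcard
    set A' := Finset.univ.biUnion (fun i : Fin k => A.image (fun y => y + x i)) with hA'
    have hA'ne : A'.Nonempty := by
      obtain ⟨b, hb⟩ := hA
      exact ⟨b + x ⟨0, hk⟩, Finset.mem_biUnion.2
        ⟨⟨0, hk⟩, Finset.mem_univ _, Finset.mem_image_of_mem _ hb⟩⟩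
    have hcard' : A'.card ≤ k * n := by
      calc A'.card ≤ ∑ i : Fin k, (A.image (fun y => y + x i)).card := Finset.card_biUnion_le
        _ ≤ ∑ _i : Fin k, n :=
            Finset.sum_le_sum fun i _ => (Finset.card_image_le).trans hcard
        _ = k * n := by simp [Finset.sum_const, mul_comm]
    have hpoint : ∀ i : Fin k, ∀ y : X, qf r (A'.image (fun z => z - x i)) y ≤ qf r A y := by
      intro i y
      have h1 : qf r (A'.image (fun z => z - x i)) y = qf r A' (y + x i) :=
        (qf_comp_add r A' (x i) y).symm
      have h2 : qf r A' (y + x i) ≤ qf r (A.image (fun z => z + x i)) (y + x i) := by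
        apply qf_anti_subset hr.le (hA.image _)
        intro z hz
        exact Finset.mem_biUnion.2 ⟨i, Finset.mem_univ _, hz⟩
      have h3 : qf r (A.image (fun z => z + x i)) (y + x i) = qf r A y := qf_comp_add' r A (x i) y
      rw [h1]
      exact h2.trans (le_of_eq h3)
    have hI : ∀ i, Integrable (qf r (A'.image (fun y => y - x i))) ϑ :=
      fun i => hcase _ (hA'ne.image _)
    calc quantErr (∑ i, a i • ϑ.map (fun y => y + x i)) (k * n) r
        ≤ ∫ y, qf r A' y ∂(∑ i, a i • ϑ.map (fun y => y + x i)) :=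
          quantErr_le _ r hA'ne hcard'
      _ = ∑ i, (a i).toReal * ∫ y, qf r (A'.image (fun z => z - x i)) y ∂ϑ :=
          integral_qf_sum ϑ a x hr.le ha ha' A' hI
      _ ≤ ∑ i, (a i).toReal * ∫ y, qf r A y ∂ϑ := by
          refine Finset.sum_le_sum fun i _ => ?_
          refine mul_le_mul_of_nonneg_left ?_ ENNReal.toReal_nonneg
          exact integral_mono (hI i) (hcase A hA) (hpoint i)
      _ = ∫ y, qf r A y ∂ϑ := by rw [← Finset.sum_mul, hsum, one_mul]
  · push_neg at hcase
    obtain ⟨B0, hB0ne, hB0⟩ := hcase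
    have hϑzero : ∀ A : Finset X, A.Nonempty → ¬ Integrable (qf r A) ϑ := by
      intro A hA h
      exact hB0 (qf_integrable_of_qf_integrable hr.le hB0ne hA h)
    have hνzero : ∀ A : Finset X, A.Nonempty →
        ¬ Integrable (qf r A) (∑ i, a i • ϑ.map (fun y => y + x i)) := by
      intro A hA h
      rw [integrable_qf_sum_iff ϑ a x ha ha' A] at h
      exact hϑzero _ (hA.image _) (h ⟨0, hk⟩)
    rw [quantErr_eq_zero ϑ r hϑzero, quantErr_eq_zero _ r hνzero]

end Aux

/-- The quantization dimension of order `r` is invariant under convolution with a finite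
convex combination of Dirac measures. -/
theorem qdim_conv_dirac (m : ℕ) (ϑ : Measure (EuclideanSpace ℝ (Fin m)))
    [IsFiniteMeasure ϑ] (r D : ℝ) (hr : 0 < r) (hϑ : HasQDim ϑ r D)
    (k : ℕ) (hk : 0 < k) (a : Fin k → ENNReal) (x : Fin k → EuclideanSpace ℝ (Fin m))
    (ha : ∀ i, 0 < a i) (ha1 : ∑ i, a i = 1) :
    HasQDim (mconv ϑ (∑ i, a i • MeasureTheory.Measure.dirac (x i))) r D := by
  classical
  have ha0 : ∀ i, a i ≠ 0 := fun i => (ha i).ne'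
  have ha' : ∀ i, a i ≠ ⊤ := by
    intro i
    have hle : a i ≤ 1 := ha1 ▸ Finset.single_le_sum (f := a)
      (fun j _ => zero_le) (Finset.mem_univ i)
    exact ne_top_of_le_ne_top ENNReal.one_ne_top hle
  have hsum : ∑ i, (a i).toReal = 1 := by
    rw [← ENNReal.toReal_sum (fun i _ => ha' i), ha1, ENNReal.toReal_one]
  rw [show mconv ϑ (∑ i, a i • MeasureTheory.Measure.dirac (x i))
      = ∑ i, a i • ϑ.map (fun y => y + x i) from mconv_eq_sum ϑ a x]
  unfold HasQDim at hϑ ⊢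
  refine sandwich_qdim hr (Nat.one_le_iff_ne_zero.2 hk.ne')
    (fun n => quantErr_nonneg ϑ n r) (fun n => quantErr_nonneg _ n r)
    (fun m' n' h1 h2 => quantErr_antitone ϑ r h1 h2)
    (fun m' n' h1 h2 => quantErr_antitone _ r h1 h2)
    (fun n hn => quantErr_conv_ge ϑ a x hr hk ha0 ha' hsum hn)
    (fun n hn => quantErr_conv_le ϑ a x hr hk ha0 ha' hsum hn)
    hϑ
end
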